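/- Let Z be a transient reversible random walk started at o with Green function G and F(x,o) = λ^{|x|} (the probability of ever hitting o from x). With m(x) = (c/(3λ))^{|x|} and 0 < c < λ < 1, the expected lifetime of the associated variable speed continuous time random walk satisfies E_o ζ = (G(o,o)/π(o))·∑_{n=0}^∞ c^n = G(o,o)/(π(o)(1−c)) < +∞. -/

import Mathlib

noncomputable instance fintypeLen (n : ℕ) : Fintype {x : List (Fin 3) // x.length = n} :=
  inferInstanceAs (Fintype (List.Vector (Fin 3) n))

lemma card_len (n : ℕ) : Nat.card {x : List (Fin 3) // x.length = n} = 3 ^ n := by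
  rw [Nat.card_eq_fintype_card]
  have := @card_vector (Fin 3) _ n
  simp only [List.Vector, Fintype.card_fin] at this
  exact (Fintype.card_congr (Equiv.refl _)).trans this

noncomputable def eLen : (Σ n : ℕ, {x : List (Fin 3) // x.length = n}) ≃ List (Fin 3) :=
  Equiv.sigmaFiberEquiv (fun x : List (Fin 3) => x.length)

lemma list_tsum (r : ℝ) (hr : 0 ≤ r) (h3r : 3 * r < 1) :
    Summable (fun x : List (Fin 3) => r ^ x.length) ∧
    ∑' x : List (Fin 3), r ^ x.length = ∑' n : ℕ, (3 * r) ^ n := by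
  have hfib : ∀ n : ℕ, ∑' y : {x : List (Fin 3) // x.length = n}, r ^ (y : List (Fin 3)).length
      = (3 * r) ^ n := by
    intro n
    have : (fun y : {x : List (Fin 3) // x.length = n} => r ^ (y : List (Fin 3)).length)
        = fun _ => r ^ n := by
      funext y; rw [y.2]
    rw [this, tsum_const, card_len, nsmul_eq_mul, mul_pow]
    push_cast; ring
  have hsum : Summable (fun p : (Σ n : ℕ, {x : List (Fin 3) // x.length = n}) =>
      r ^ (p.2 : List (Fin 3)).length) := by
    apply (summable_sigma_of_nonneg ?_).2 ⟨?_, ?_⟩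
    · intro p; positivity
    · intro n; exact Summable.of_finite
    · simp only [hfib]
      exact summable_geometric_of_lt_one (by positivity) h3r
  have hcomp : ((fun x : List (Fin 3) => r ^ x.length) ∘ ⇑eLen)
      = fun p : (Σ n : ℕ, {x : List (Fin 3) // x.length = n}) =>
        r ^ (p.2 : List (Fin 3)).length := by
    funext p; simp only [eLen, Equiv.sigmaFiberEquiv, Equiv.coe_fn_mk, Function.comp]
  have hS : Summable (fun x : List (Fin 3) => r ^ x.length) := by
    rw [← eLen.summable_iff, hcomp]; exact hsum
  refine ⟨hS, ?_⟩
  rw [← eLen.tsum_eq]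
  calc ∑' p, ((fun x : List (Fin 3) => r ^ x.length) ∘ ⇑eLen) p
      = ∑' p : (Σ n : ℕ, {x : List (Fin 3) // x.length = n}),
        r ^ (p.2 : List (Fin 3)).length := by rw [hcomp]
    _ = ∑' n : ℕ, ∑' y : {x : List (Fin 3) // x.length = n},
        r ^ (y : List (Fin 3)).length := hsum.tsum_sigma
    _ = ∑' n : ℕ, (3 * r) ^ n := by simp only [hfib]


/-- Expected lifetime of the variable speed continuous time random walk on the
Sierpiński graph (vertices = finite words over a three-letter alphabet, root
`o = []`). Given the Green function `G` of the transient reversible random walk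
with reversible measure `π`, hitting probabilities `F(x,o) = λ^{|x|}` (so that
`G(x,o) = λ^{|x|} G(o,o)`), and speed measure `m(x) = (c/(3λ))^{|x|}` with
`0 < c < λ < 1`, the expected lifetime
`E_o ζ = ∑_{x∈X} (m(x)/π(x)) G(o,x)` equals
`(G(o,o)/π(o))·∑_{n≥0} c^n = G(o,o)/(π(o)(1−c)) < ∞`. -/
theorem stmt18 (l cc : ℝ) (hc : 0 < cc) (hcl : cc < l) (hl : l < 1)
    (π : List (Fin 3) → ℝ) (G : List (Fin 3) → List (Fin 3) → ℝ)
    (hπpos : ∀ x, 0 < π x)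
    (hGpos : 0 < G [] [])
    (hrev : ∀ x, π [] * G [] x = π x * G x [])
    (hF : ∀ x, G x [] = l ^ x.length * G [] [])
    (m : List (Fin 3) → ℝ) (hm : ∀ x, m x = (cc / (3 * l)) ^ x.length) :
    Summable (fun x : List (Fin 3) => m x / π x * G [] x) ∧
    (∑' x : List (Fin 3), m x / π x * G [] x = G [] [] / π [] * ∑' n : ℕ, cc ^ n) ∧
    (∑' x : List (Fin 3), m x / π x * G [] x = G [] [] / (π [] * (1 - cc))) := by

  have hl0 : (0:ℝ) < l := hc.trans hcl
  have hπ0 : π [] ≠ 0 := (hπpos []).ne'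
  have hr : (0:ℝ) ≤ cc / 3 := by positivity
  have h3r : 3 * (cc / 3) < 1 := by linarith [hcl.trans hl]
  have hfx : (fun x : List (Fin 3) => m x / π x * G [] x)
      = fun x : List (Fin 3) => (cc / 3) ^ x.length * (G [] [] / π []) := by
    funext x
    have hπx : π x ≠ 0 := (hπpos x).ne'
    have hG : G [] x = π x * G x [] / π [] := by
      rw [eq_div_iff hπ0, ← hrev x]; ring
    rw [hm x, hG, hF x]
    have key : (cc / (3 * l)) * l = cc / 3 := by field_simp
    field_simp
    rw [← mul_pow, key]
  have hLT := list_tsum (cc / 3) hr h3r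
  have h3c : ∀ n : ℕ, (3 * (cc / 3)) ^ n = cc ^ n := by
    intro n; congr 1; ring
  constructor
  · rw [hfx]
    exact hLT.1.mul_right _
  have hmain : ∑' x : List (Fin 3), m x / π x * G [] x
      = G [] [] / π [] * ∑' n : ℕ, cc ^ n := by
    rw [hfx, tsum_mul_right, hLT.2]
    simp only [h3c]
    ring
  refine ⟨hmain, ?_⟩
  rw [hmain, tsum_geometric_of_lt_one hc.le (hcl.trans hl)]
  field_simp
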